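/- In the concrete quasi-free CAR model: let l ∈ ℤ with λ_l ≠ 1/2 and let ξ ∈ H satisfy the l-th intertwining equations. Then for all finite subsets A, B ⊆ ℤ with l ∉ A and l ∉ B: if ⟨e_{(A,B)}, ξ⟩ ≠ 0 and ⟨e_{(A∪{l}, B∪{l})}, ξ⟩ = 0, then card A ≡ card B (mod 2). (Unpaired basis coefficients of ξ occur only at pairs of equal parity.) -/

import Mathlib

/- The concrete quasi-free CAR model: `H = ℓ²(Finset ℤ × Finset ℤ)` with orthonormal basis
`e (A, B)`, vacuum `Ω = e (∅, ∅)`, and operators `a l`, `b l`, `G` given on the basis by the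
quasi-free formulas with symbol `λ` (diagonal, `R h_l = λ_l h_l`). -/

noncomputable section

/-- The GNS Hilbert space: `ℓ²` over pairs of finite subsets of `ℤ`. -/
abbrev CARSpace := lp (fun _ : Finset ℤ × Finset ℤ => ℂ) 2

/-- The orthonormal basis vector `e_{(A,B)}`. -/
def carE (p : Finset ℤ × Finset ℤ) : CARSpace := lp.single 2 p 1

/-- The vacuum vector `Ω = e_{(∅,∅)}`. -/
def carΩ : CARSpace := carE (∅, ∅)

/-- `n(l, X)` = number of elements of `X` strictly below `l`. -/
def nlt (l : ℤ) (X : Finset ℤ) : ℕ := (X.filter fun j => j < l).card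

/-- `a` is the family of quasi-free annihilation-type operators `a_l = π_R(a(h_l))`:
`a_l e_{(A,B)} = √(1−λ_l)·(−1)^{|B|}·(−1)^{n(l,A)}·[l ∉ A]·e_{(A∪{l},B)}
              + √(λ_l)·(−1)^{n(l,B)}·[l ∈ B]·e_{(A,B∖{l})}`. -/
def IsCAR_a (lam : ℤ → ℝ) (a : ℤ → CARSpace →L[ℂ] CARSpace) : Prop :=
  ∀ (l : ℤ) (A B : Finset ℤ),
    a l (carE (A, B)) =
      ((Real.sqrt (1 - lam l) : ℂ) * (-1) ^ B.card * (-1) ^ nlt l A *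
          (if l ∈ A then 0 else 1)) • carE (insert l A, B) +
      ((Real.sqrt (lam l) : ℂ) * (-1) ^ nlt l B *
          (if l ∈ B then 1 else 0)) • carE (A, B.erase l)

/-- `b` is the family of commutant quasi-free operators:
`b_l e_{(A,B)} = √(λ_l)·(−1)^{|B|}·(−1)^{n(l,A)}·[l ∉ A]·e_{(A∪{l},B)}
              − √(1−λ_l)·(−1)^{n(l,B)}·[l ∈ B]·e_{(A,B∖{l})}`. -/
def IsCAR_b (lam : ℤ → ℝ) (b : ℤ → CARSpace →L[ℂ] CARSpace) : Prop :=
  ∀ (l : ℤ) (A B : Finset ℤ),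
    b l (carE (A, B)) =
      ((Real.sqrt (lam l) : ℂ) * (-1) ^ B.card * (-1) ^ nlt l A *
          (if l ∈ A then 0 else 1)) • carE (insert l A, B) -
      ((Real.sqrt (1 - lam l) : ℂ) * (-1) ^ nlt l B *
          (if l ∈ B then 1 else 0)) • carE (A, B.erase l)

/-- `G = Γ⊗Γ` : `G e_{(A,B)} = (−1)^{|A|+|B|} e_{(A,B)}`. -/
def IsCAR_G (G : CARSpace →L[ℂ] CARSpace) : Prop :=
  ∀ (A B : Finset ℤ), G (carE (A, B)) = ((-1 : ℂ) ^ (A.card + B.card)) • carE (A, B)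

/-- `ξ` satisfies the `l`-th intertwining equations:
`(1−λ_l)^{−1/2}·(a_l ξ) = −λ_l^{−1/2}·G(b_l ξ)` and
`λ_l^{−1/2}·(a_l* ξ) = −(1−λ_l)^{−1/2}·b_l*(G ξ)`. -/
def IntertwinesAt (lam : ℤ → ℝ) (a b : ℤ → CARSpace →L[ℂ] CARSpace)
    (G : CARSpace →L[ℂ] CARSpace) (l : ℤ) (ξ : CARSpace) : Prop :=
  (Real.sqrt (1 - lam l) : ℂ)⁻¹ • a l ξ = -((Real.sqrt (lam l) : ℂ)⁻¹) • G (b l ξ) ∧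
  (Real.sqrt (lam l) : ℂ)⁻¹ • (star (a l)) ξ =
    -((Real.sqrt (1 - lam l) : ℂ)⁻¹) • (star (b l)) (G ξ)

local notation "⟪" x ", " y "⟫" => @inner ℂ _ _ x y

lemma carE_apply (Q P : Finset ℤ × Finset ℤ) :
    (carE Q : ∀ _ : Finset ℤ × Finset ℤ, ℂ) P = if P = Q then 1 else 0 := by
  rw [carE, lp.single_apply]
  split_ifs with h
  · subst h; simp
  · simp [Pi.single_apply, h]

lemma inner_carE (P : Finset ℤ × Finset ℤ) (x : CARSpace) : ⟪carE P, x⟫ = x P := by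
  rw [carE, lp.inner_single_left]
  simp [RCLike.inner_apply]

lemma hasSum_inner_carE (T : CARSpace →L[ℂ] CARSpace) (ξ : CARSpace) (P : Finset ℤ × Finset ℤ) :
    HasSum (fun Q => ξ Q * ⟪carE P, T (carE Q)⟫) ⟪carE P, T ξ⟫ := by
  have h0 : HasSum (fun Q : Finset ℤ × Finset ℤ => lp.single 2 Q (ξ Q)) ξ :=
    lp.hasSum_single ENNReal.ofNat_ne_top ξ
  have h1 := h0.mapL ((innerSL ℂ (carE P)).comp T)
  have hfun : ∀ Q : Finset ℤ × Finset ℤ,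
      ((innerSL ℂ (carE P)).comp T) (lp.single 2 Q (ξ Q)) = ξ Q * ⟪carE P, T (carE Q)⟫ := by
    intro Q
    have hsingle : lp.single 2 Q (ξ Q) = (ξ Q) • carE Q := by
      rw [carE, ← lp.single_smul]
      norm_num
    rw [hsingle]
    simp [inner_smul_right]
  simp only [hfun] at h1
  exact h1


/-- let `l ∈ ℤ` with `λ_l ≠ 1/2` and let `ξ ∈ H` satisfy the `l`-th
intertwining equations. Then for all finite `A, B ⊆ ℤ` with `l ∉ A`, `l ∉ B`: if
`⟨e_{(A,B)}, ξ⟩ ≠ 0` and `⟨e_{(A∪{l},B∪{l})}, ξ⟩ = 0`, then `card A ≡ card B (mod 2)`. -/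
theorem stmt12 (lam : ℤ → ℝ) (hlam : ∀ l, 0 < lam l ∧ lam l < 1)
    (a b : ℤ → CARSpace →L[ℂ] CARSpace) (G : CARSpace →L[ℂ] CARSpace)
    (ha : IsCAR_a lam a) (hb : IsCAR_b lam b) (hG : IsCAR_G G)
    (l : ℤ) (hl : lam l ≠ 1 / 2)
    (ξ : CARSpace) (hξ : IntertwinesAt lam a b G l ξ) :
    ∀ A B : Finset ℤ, l ∉ A → l ∉ B →
      ⟪carE (A, B), ξ⟫ ≠ 0 → ⟪carE (insert l A, insert l B), ξ⟫ = 0 →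
      A.card % 2 = B.card % 2 := by
  intro A B hA hB h0 h1
  rw [inner_carE] at h0 h1
  obtain ⟨hE1, -⟩ := hξ
  obtain ⟨hl0, hl1⟩ := hlam l
  have hμ : (Real.sqrt (lam l) : ℂ) ≠ 0 :=
    Complex.ofReal_ne_zero.mpr (ne_of_gt (Real.sqrt_pos.mpr hl0))
  have hν : (Real.sqrt (1 - lam l) : ℂ) ≠ 0 :=
    Complex.ofReal_ne_zero.mpr (ne_of_gt (Real.sqrt_pos.mpr (by linarith)))
  -- the two inequalities used in both support arguments
  have key : ∀ Q1 Q2 : Finset ℤ, (Q1, Q2) ≠ ((A, B) : Finset ℤ × Finset ℤ) →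
      (Q1, Q2) ≠ ((insert l A, insert l B) : Finset ℤ × Finset ℤ) →
      ∀ c1 c2 : ℂ,
      ξ (Q1, Q2) * ((c1 * (if l ∈ Q1 then 0 else 1)) *
          (if ((insert l A, B) : Finset ℤ × Finset ℤ) = (insert l Q1, Q2) then 1 else 0) +
        (c2 * (if l ∈ Q2 then 1 else 0)) *
          (if ((insert l A, B) : Finset ℤ × Finset ℤ) = (Q1, Q2.erase l) then 1 else 0)) = 0 := by
    intro Q1 Q2 hQ e2 c1 c2
    by_cases m1 : l ∈ Q1 <;> by_cases m2 : l ∈ Q2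
    · have hne : ((insert l A, B) : Finset ℤ × Finset ℤ) ≠ (Q1, Q2.erase l) := by
        intro h
        rw [Prod.mk.injEq] at h
        obtain ⟨hx, hy⟩ := h
        refine e2 ?_
        rw [Prod.mk.injEq]
        exact ⟨hx.symm, by rw [hy]; exact (Finset.insert_erase m2).symm⟩
      simp [m1, m2, hne]
    · simp [m1, m2]
    · have hne1 : ((insert l A, B) : Finset ℤ × Finset ℤ) ≠ (insert l Q1, Q2) := by
        intro h
        rw [Prod.mk.injEq] at h
        exact hB (h.2 ▸ m2)
      have hne2 : ((insert l A, B) : Finset ℤ × Finset ℤ) ≠ (Q1, Q2.erase l) := by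
        intro h
        rw [Prod.mk.injEq] at h
        exact m1 (h.1 ▸ Finset.mem_insert_self l A)
      simp [m1, m2, hne1, hne2]
    · have hne1 : ((insert l A, B) : Finset ℤ × Finset ℤ) ≠ (insert l Q1, Q2) := by
        intro h
        rw [Prod.mk.injEq] at h
        obtain ⟨hx, hy⟩ := h
        refine hQ ?_
        rw [Prod.mk.injEq]
        refine ⟨?_, hy.symm⟩
        have := congrArg (fun s => Finset.erase s l) hx
        simpa [Finset.erase_insert hA, Finset.erase_insert m1] using this.symm
      simp [m1, m2, hne1]
  -- coefficient of e_P in a l ξ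
  have haξ : ⟪carE (insert l A, B), a l ξ⟫ =
      ξ (A, B) * ((Real.sqrt (1 - lam l) : ℂ) * (-1) ^ B.card * (-1) ^ nlt l A) := by
    have hsupp : ∀ Q ∉ ({(A, B)} : Finset (Finset ℤ × Finset ℤ)),
        ξ Q * ⟪carE (insert l A, B), a l (carE Q)⟫ = 0 := by
      rintro ⟨Q1, Q2⟩ hQ
      simp only [Finset.mem_singleton] at hQ
      by_cases e2 : ((Q1, Q2) : Finset ℤ × Finset ℤ) = (insert l A, insert l B)
      · rw [e2, h1, zero_mul]
      · rw [inner_carE, ha l Q1 Q2]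
        simp only [lp.coeFn_add, lp.coeFn_smul, Pi.add_apply, Pi.smul_apply, carE_apply,
          smul_eq_mul]
        exact key Q1 Q2 hQ e2 _ _
    have hval := (hasSum_inner_carE (a l) ξ (insert l A, B)).unique
      (hasSum_sum_of_ne_finset_zero hsupp)
    rw [Finset.sum_singleton] at hval
    rw [hval, ha l A B, inner_carE]
    simp only [lp.coeFn_add, lp.coeFn_smul, Pi.add_apply, Pi.smul_apply, carE_apply,
      smul_eq_mul]
    simp [hA, hB]
  -- coefficient of e_P in G (b l ξ)
  have hmat : ∀ Q1 Q2 : Finset ℤ, (G.comp (b l)) (carE (Q1, Q2)) =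
      (((Real.sqrt (lam l) : ℂ) * (-1) ^ Q2.card * (-1) ^ nlt l Q1 *
          (-1) ^ ((insert l Q1).card + Q2.card)) * (if l ∈ Q1 then 0 else 1)) •
        carE (insert l Q1, Q2) +
      ((-((Real.sqrt (1 - lam l) : ℂ) * (-1) ^ nlt l Q2 *
          (-1) ^ (Q1.card + (Q2.erase l).card))) * (if l ∈ Q2 then 1 else 0)) •
        carE (Q1, Q2.erase l) := by
    intro Q1 Q2
    rw [ContinuousLinearMap.comp_apply, hb l Q1 Q2, map_sub, map_smul, map_smul,
      hG (insert l Q1) Q2, hG Q1 (Q2.erase l), smul_smul, smul_smul, sub_eq_add_neg,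
      ← neg_smul]
    ring_nf
  have hGbξ : ⟪carE (insert l A, B), G (b l ξ)⟫ =
      ξ (A, B) * ((Real.sqrt (lam l) : ℂ) * (-1) ^ B.card * (-1) ^ nlt l A *
        (-1) ^ ((insert l A).card + B.card)) := by
    have hcomp : G (b l ξ) = (G.comp (b l)) ξ := rfl
    have hsupp : ∀ Q ∉ ({(A, B)} : Finset (Finset ℤ × Finset ℤ)),
        ξ Q * ⟪carE (insert l A, B), (G.comp (b l)) (carE Q)⟫ = 0 := by
      rintro ⟨Q1, Q2⟩ hQ
      simp only [Finset.mem_singleton] at hQ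
      by_cases e2 : ((Q1, Q2) : Finset ℤ × Finset ℤ) = (insert l A, insert l B)
      · rw [e2, h1, zero_mul]
      · rw [inner_carE, hmat Q1 Q2]
        simp only [lp.coeFn_add, lp.coeFn_smul, Pi.add_apply, Pi.smul_apply, carE_apply,
          smul_eq_mul]
        exact key Q1 Q2 hQ e2 _ _
    have hval := (hasSum_inner_carE (G.comp (b l)) ξ (insert l A, B)).unique
      (hasSum_sum_of_ne_finset_zero hsupp)
    rw [Finset.sum_singleton] at hval
    rw [hcomp, hval, hmat A B, inner_carE]
    simp only [lp.coeFn_add, lp.coeFn_smul, Pi.add_apply, Pi.smul_apply, carE_apply,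
      smul_eq_mul]
    simp [hA, hB]
  -- take the inner product of the first intertwining equation with e_P
  have hIn := congrArg (fun v => ⟪carE (insert l A, B), v⟫) hE1
  simp only [inner_smul_right] at hIn
  rw [haξ, hGbξ] at hIn
  -- parity argument
  rcases Nat.even_or_odd (A.card + B.card) with he | ho
  · rw [Nat.even_iff] at he; omega
  · exfalso
    have hpow : ((-1 : ℂ)) ^ ((insert l A).card + B.card) = 1 := by
      rw [Finset.card_insert_of_notMem hA]
      refine Even.neg_one_pow ?_
      rcases ho with ⟨k, hk⟩
      exact ⟨k + 1, by omega⟩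
    rw [hpow] at hIn
    field_simp at hIn
    apply h0
    have h2 : ξ (A, B) * ((-1 : ℂ) ^ B.card * (-1) ^ nlt l A *
        (Real.sqrt (lam l) : ℂ) * (Real.sqrt (1 - lam l) : ℂ) * 2) = 0 := by
      exact absurd hIn (by norm_num)
    have hne : ((-1 : ℂ) ^ B.card * (-1) ^ nlt l A *
        (Real.sqrt (lam l) : ℂ) * (Real.sqrt (1 - lam l) : ℂ) * 2) ≠ 0 := by
      refine mul_ne_zero (mul_ne_zero (mul_ne_zero (mul_ne_zero ?_ ?_) hμ) hν) two_ne_zero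
      · exact pow_ne_zero _ (by norm_num)
      · exact pow_ne_zero _ (by norm_num)
    exact (mul_eq_zero.mp h2).resolve_right hne

end
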